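/- Let A be an n×n complex matrix with upper bandwidth β ≥ 1 and lower bandwidth γ ≥ 1, and suppose f(A) = ∑_{j=0}^∞ f_j P_j(A) where each P_j is a polynomial of degree j satisfying ‖P_j(A)‖ ≤ 2 in the operator norm, the series converging in operator norm. Then for k ≠ ℓ, with ξ = ⌈(ℓ-k)/β⌉ if k < ℓ and ξ = ⌈(k-ℓ)/γ⌉ otherwise, one has |(f(A))_{k,ℓ}| ≤ 2 ∑_{j=ξ}^∞ |f_j|. -/

import Mathlib

open scoped Matrix.Norms.L2Operator

/-- An entry of a matrix is bounded by its `L2` operator norm. -/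
lemma entry_le_l2_opNorm {n : ℕ} (M : Matrix (Fin n) (Fin n) ℂ) (k ℓ : Fin n) :
    ‖M k ℓ‖ ≤ ‖M‖ := by
  have hx : M k ℓ = (M.mulVec (Pi.single ℓ 1)) k := by
    rw [Matrix.mulVec_single]
    simp
  set y : EuclideanSpace ℂ (Fin n) :=
    (EuclideanSpace.equiv (Fin n) ℂ).symm (M.mulVec (Pi.single ℓ 1)) with hy
  have h1 : ‖y‖ ≤ ‖M‖ * ‖((EuclideanSpace.equiv (Fin n) ℂ).symm (Pi.single ℓ 1) :
      EuclideanSpace ℂ (Fin n))‖ := by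
    exact M.l2_opNorm_mulVec ((EuclideanSpace.equiv (Fin n) ℂ).symm (Pi.single ℓ 1))
  have h2 : ‖((EuclideanSpace.equiv (Fin n) ℂ).symm (Pi.single ℓ 1) :
      EuclideanSpace ℂ (Fin n))‖ = 1 := by
    rw [show ((EuclideanSpace.equiv (Fin n) ℂ).symm (Pi.single ℓ 1) :
        EuclideanSpace ℂ (Fin n)) = EuclideanSpace.single ℓ (1 : ℂ) from rfl,
      EuclideanSpace.norm_single]
    norm_num
  have h3 : ‖M k ℓ‖ ≤ ‖y‖ := by
    have : ‖y k‖ ≤ ‖y‖ := by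
      rw [EuclideanSpace.norm_eq]
      have hsq : ‖y k‖ ^ 2 ≤ ∑ i, ‖y i‖ ^ 2 := by
        refine Finset.single_le_sum (f := fun i => ‖y i‖ ^ 2) ?_ (Finset.mem_univ k)
        intro i _; positivity
      calc ‖y k‖ = Real.sqrt (‖y k‖ ^ 2) := by
              rw [Real.sqrt_sq (norm_nonneg _)]
        _ ≤ Real.sqrt (∑ i, ‖y i‖ ^ 2) := Real.sqrt_le_sqrt hsq
    have hyk : y k = M k ℓ := hx.symm
    rwa [hyk] at this
  calc ‖M k ℓ‖ ≤ ‖y‖ := h3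
    _ ≤ ‖M‖ * 1 := by rw [← h2]; exact h1
    _ = ‖M‖ := mul_one _

/-- Decay bound for entries of a matrix function expanded in a series of polynomials of
degree `j` with `‖P_j(A)‖ ≤ 2` (e.g. Faber polynomials of a convex set containing the
field of values of `A`). -/
theorem stmt_3 {n : ℕ} (A : Matrix (Fin n) (Fin n) ℂ) (β γ : ℕ)
    (hβ : 1 ≤ β) (hγ : 1 ≤ γ)
    (hband : ∀ k ℓ : Fin n, ((ℓ : ℕ) - (k : ℕ) > β ∨ (k : ℕ) - (ℓ : ℕ) > γ) → A k ℓ = 0)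
    (P : ℕ → Polynomial ℂ) (hdeg : ∀ j, (P j).natDegree = j)
    (hP : ∀ j, ‖(Polynomial.aeval A (P j) : Matrix (Fin n) (Fin n) ℂ)‖ ≤ 2)
    (f : ℕ → ℂ) (hsumf : Summable fun j => ‖f j‖)
    (F : Matrix (Fin n) (Fin n) ℂ)
    (hF : HasSum (fun j => f j • (Polynomial.aeval A (P j) : Matrix (Fin n) (Fin n) ℂ)) F)
    (k ℓ : Fin n) (hkl : k ≠ ℓ)
    (ξ : ℕ)
    (hξ : ξ = if (k : ℕ) < (ℓ : ℕ) then ((ℓ : ℕ) - (k : ℕ)) ⌈/⌉ β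
              else ((k : ℕ) - (ℓ : ℕ)) ⌈/⌉ γ) :
    ‖F k ℓ‖ ≤ 2 * ∑' j : ℕ, ‖f (ξ + j)‖ := by
  classical
  -- bandwidth of powers of A
  have hpow : ∀ m : ℕ, ∀ p q : Fin n,
      ((p : ℕ) + m * β < q ∨ (q : ℕ) + m * γ < p) → (A ^ m) p q = 0 := by
    intro m
    induction m with
    | zero =>
      intro p q h
      have hne : p ≠ q := by
        intro hpq; subst hpq; omega
      simp [Matrix.one_apply_ne hne]
    | succ m ih =>
      intro p q h
      rw [pow_succ, Matrix.mul_apply]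
      apply Finset.sum_eq_zero
      intro i _
      rcases h with h | h
      · by_cases hi : (p : ℕ) + m * β < i
        · rw [ih p i (Or.inl hi), zero_mul]
        · have hm : (m + 1) * β = m * β + β := by ring
          rw [hband i q (Or.inl (by omega)), mul_zero]
      · by_cases hi : (i : ℕ) + m * γ < p
        · rw [ih p i (Or.inr hi), zero_mul]
        · have hm : (m + 1) * γ = m * γ + γ := by ring
          rw [hband i q (Or.inr (by omega)), mul_zero]
  -- entries of P_j(A) vanish when j < ξ
  have hvanish : ∀ j, j < ξ → (Polynomial.aeval A (P j) : Matrix (Fin n) (Fin n) ℂ) k ℓ = 0 := by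
    intro j hj
    rw [Polynomial.aeval_eq_sum_range, hdeg j]
    rw [Matrix.sum_apply]
    apply Finset.sum_eq_zero
    intro i hi
    rw [Finset.mem_range] at hi
    have hij : i ≤ j := Nat.lt_succ_iff.mp hi
    rw [Matrix.smul_apply]
    by_cases hkl' : (k : ℕ) < (ℓ : ℕ)
    · have hξ' : ξ = ((ℓ : ℕ) - (k : ℕ)) ⌈/⌉ β := by rw [hξ, if_pos hkl']
      have hjξ : ¬ (((ℓ : ℕ) - (k : ℕ)) ⌈/⌉ β ≤ j) := by omega
      rw [ceilDiv_le_iff_le_mul (by omega : 0 < β)] at hjξ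
      have hlt : β * j < (ℓ : ℕ) - (k : ℕ) := by
        simpa [smul_eq_mul] using lt_of_not_ge hjξ
      have h1 : i * β ≤ j * β := mul_le_mul_left hij β
      have h2 : β * j = j * β := Nat.mul_comm _ _
      have : (k : ℕ) + i * β < ℓ := by omega
      rw [hpow i k ℓ (Or.inl this), smul_zero]
    · have hlk : (ℓ : ℕ) < (k : ℕ) := by
        have : (k : ℕ) ≠ (ℓ : ℕ) := fun h => hkl (Fin.ext h)
        omega
      have hξ' : ξ = ((k : ℕ) - (ℓ : ℕ)) ⌈/⌉ γ := by rw [hξ, if_neg hkl']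
      have hjξ : ¬ (((k : ℕ) - (ℓ : ℕ)) ⌈/⌉ γ ≤ j) := by omega
      rw [ceilDiv_le_iff_le_mul (by omega : 0 < γ)] at hjξ
      have hlt : γ * j < (k : ℕ) - (ℓ : ℕ) := by
        simpa [smul_eq_mul] using lt_of_not_ge hjξ
      have h1 : i * γ ≤ j * γ := mul_le_mul_left hij γ
      have h2 : γ * j = j * γ := Nat.mul_comm _ _
      have : (ℓ : ℕ) + i * γ < k := by omega
      rw [hpow i k ℓ (Or.inr this), smul_zero]
  -- the entry map is a continuous linear map
  let E : Matrix (Fin n) (Fin n) ℂ →L[ℂ] ℂ :=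
    LinearMap.mkContinuous
      { toFun := fun M => M k ℓ
        map_add' := fun M N => rfl
        map_smul' := fun c M => rfl } 1
      (fun M => by
        exact (entry_le_l2_opNorm M k ℓ).trans_eq (one_mul ‖M‖).symm)
  -- transfer the sum to entries
  have hEntry : HasSum (fun j => f j * (Polynomial.aeval A (P j) : Matrix (Fin n) (Fin n) ℂ) k ℓ)
      (F k ℓ) := by
    have := hF.mapL E
    exact this
  -- the first ξ terms vanish
  have hshift : HasSum
      (fun j => f (j + ξ) * (Polynomial.aeval A (P (j + ξ)) : Matrix (Fin n) (Fin n) ℂ) k ℓ)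
      (F k ℓ) := by
    have hzero : (∑ i ∈ Finset.range ξ,
        f i * (Polynomial.aeval A (P i) : Matrix (Fin n) (Fin n) ℂ) k ℓ) = 0 := by
      apply Finset.sum_eq_zero
      intro i hi
      rw [hvanish i (Finset.mem_range.mp hi), mul_zero]
    have := (hasSum_nat_add_iff' (f := fun j =>
      f j * (Polynomial.aeval A (P j) : Matrix (Fin n) (Fin n) ℂ) k ℓ) ξ).mpr hEntry
    rwa [hzero, sub_zero] at this
  -- summability of the bound
  have hsum2 : HasSum (fun j => 2 * ‖f (ξ + j)‖)
      (2 * ∑' j : ℕ, ‖f (ξ + j)‖) := by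
    have hs : Summable (fun j => ‖f (ξ + j)‖) := by
      have := (summable_nat_add_iff (f := fun j => ‖f j‖) ξ).mpr hsumf
      simpa [Nat.add_comm] using this
    exact hs.hasSum.mul_left 2
  -- conclude
  rw [← hshift.tsum_eq]
  have hb : ∀ j : ℕ,
      ‖f (j + ξ) * (Polynomial.aeval A (P (j + ξ)) : Matrix (Fin n) (Fin n) ℂ) k ℓ‖
        ≤ 2 * ‖f (ξ + j)‖ := by
    intro j
    rw [norm_mul, Nat.add_comm j ξ]
    calc ‖f (ξ + j)‖ * ‖(Polynomial.aeval A (P (ξ + j)) : Matrix (Fin n) (Fin n) ℂ) k ℓ‖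
        ≤ ‖f (ξ + j)‖ * 2 := by
          apply mul_le_mul_of_nonneg_left _ (norm_nonneg _)
          exact (entry_le_l2_opNorm _ k ℓ).trans (hP (ξ + j))
      _ = 2 * ‖f (ξ + j)‖ := by ring
  calc ‖∑' j : ℕ,
        f (j + ξ) * (Polynomial.aeval A (P (j + ξ)) : Matrix (Fin n) (Fin n) ℂ) k ℓ‖
      = ‖∑' j : ℕ,
        f (j + ξ) * (Polynomial.aeval A (P (j + ξ)) : Matrix (Fin n) (Fin n) ℂ) k ℓ‖ := rfl
    _ ≤ 2 * ∑' j : ℕ, ‖f (ξ + j)‖ := tsum_of_norm_bounded hsum2 hb
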